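/- Let B be Bernoulli on {0,1} and L a real random variable whose conditional densities satisfy p_{L|B}(l|0) = e^{c·l} · (P_B(1)/P_B(0)) · p_{L|B}(l|1) for a constant c > 0 (generalized consistency with scaling ratio c = s_o/s). Then the density of the asymmetric L-value L_a = (-1)^B L satisfies p_{L_a}(-l) / p_{L_a}(l) = e^{-c·l} for all l where p_{L_a}(l) > 0. -/

import Mathlib

open Real

/-- generalized consistency with scaling ratio `c = s_o/s > 0`:
if `p(l|0) = e^{c·l} · (P(1)/P(0)) · p(l|1)`, then the density of the asymmetric
L-value `L_a = (-1)^B L`, namely `p_{L_a}(l) = P(0)p(l|0) + P(1)p(-l|1)`, satisfies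
`p_{L_a}(-l)/p_{L_a}(l) = e^{-c·l}` wherever `p_{L_a}(l) > 0`. -/
theorem asymmetric_ratio
    (P0 P1 : ℝ) (hP0 : 0 < P0) (hP1 : 0 < P1)
    (c : ℝ) (hc : 0 < c)
    (p : Bool → ℝ → ℝ) (hpnn : ∀ b l, 0 ≤ p b l)
    (hcons : ∀ l : ℝ, p false l = Real.exp (c * l) * (P1 / P0) * p true l)
    (pLa : ℝ → ℝ)
    (hpLa : ∀ l : ℝ, pLa l = P0 * p false l + P1 * p true (-l)) :
    ∀ l : ℝ, 0 < pLa l → pLa (-l) / pLa l = Real.exp (-(c * l)) := by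
  intro l h
  have key : pLa (-l) = Real.exp (-(c * l)) * pLa l := by
    rw [hpLa, hpLa, hcons, hcons]
    have h1 : Real.exp (c * -l) = Real.exp (-(c * l)) := by ring_nf
    have h2 : Real.exp (-(c * l)) * Real.exp (c * l) = 1 := by
      rw [← Real.exp_add]; simp
    rw [h1]
    field_simp
    linear_combination (-p true l) * h2
  rw [key, mul_div_assoc, div_self (ne_of_gt h), mul_one]
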